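/- arXiv:1811.11170 — 2 statements merged into one kernel-verified Lean document; each statement's English description precedes it below -/
import Mathlib

section
/- Let (𝐓,γ) be a quasistatic dynamical system satisfying conditions (I) and (II). Then there is a constant C > 0 such that for all bounded functions F of the form F = f_a · (f_b ∘ T_k ∘ ⋯ ∘ T_1)^q with T_i ∈ 𝐓', a,b ∈ {1,…,d}, q ∈ {0,1}: (f1) |μ(f̄_α^{n,k} f̄_β^{n,l})| ≤ C|k−l|^{−φ} whenever 0 ≤ l,k ≤ n and |k−l| ≥ n₁, and |μ̂_s(f̂_{α,s} · f̂_{β,s} ∘ γ_s^k)| ≤ C k^{−φ} for all s ∈ [0,1] and k ≥ n₁; (f2) |μ̂_r(F) − μ̂_s(F)| ≤ C|r−s|^{θ₂} for all r,s ∈ [0,1], where θ₂ = φψ/(1+φ); (f3) with θ₃ = φψ/(φ+ψ+1) and η₃ = ψ/(φ+ψ+1) < 1/3, there is c₀ > 0 such that for all s ∈ [0,1] with c₀ n^{η₃−1} < s ≤ 1, |μ_{n,⌊ns⌋}(F) − μ̂_s(F)| ≤ C n^{−θ₃}. -/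
open MeasureTheory Filter Set ProbabilityTheory
open scoped Classical

noncomputable section

variable {X : Type*}

/-- `compSeq S k = S k ∘ ⋯ ∘ S 1` (`= id` for `k = 0`): a `k`-fold composition `𝒯_k`. -/
def compSeq (S : ℕ → X → X) : ℕ → X → X
  | 0 => id
  | k+1 => S (k+1) ∘ compSeq S k

/-- `rowComp T n m k = T n (m+k) ∘ ⋯ ∘ T n (m+1)` (`= id` for `k = 0`). -/
def rowComp (T : ℕ → ℕ → X → X) (n m : ℕ) : ℕ → X → X
  | 0 => id
  | k+1 => T n (m+k+1) ∘ rowComp T n m k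

/-- `gammaSeq γ r k = γ_{r k} ∘ ⋯ ∘ γ_{r 1}` (`= id` for `k = 0`). -/
def gammaSeq (γ : ℝ → X → X) (r : ℕ → ℝ) : ℕ → X → X
  | 0 => id
  | k+1 => γ (r (k+1)) ∘ gammaSeq γ r k

/-- `gammaRow γ n m k = γ_{(m+k)/n} ∘ ⋯ ∘ γ_{(m+1)/n}` (`= id` for `k = 0`). -/
def gammaRow (γ : ℝ → X → X) (n m : ℕ) : ℕ → X → X
  | 0 => id
  | k+1 => γ (((m:ℝ) + k + 1) / (n:ℝ)) ∘ gammaRow γ n m k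

/-- The family `𝐓' = 𝐓 ∪ {γ_t : t ∈ [0,1]}`. -/
def Tprime (T : ℕ → ℕ → X → X) (γ : ℝ → X → X) : Set (X → X) :=
  {S | (∃ n k : ℕ, 1 ≤ n ∧ k ≤ n ∧ S = T n k) ∨ ∃ t ∈ Set.Icc (0:ℝ) 1, S = γ t}

/-- Functions of the form `F = f_a · (f_b ∘ T_k ∘ ⋯ ∘ T_1)^q`, `T_i ∈ 𝐓'`,
`a, b ∈ {1,…,d}`, `q ∈ {0,1}`. -/
def IsFform {d : ℕ} (f : X → Fin d → ℝ) (T' : Set (X → X)) (F : X → ℝ) : Prop :=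
  ∃ (a b : Fin d) (q k : ℕ) (S : ℕ → X → X), q ≤ 1 ∧ (∀ i, 1 ≤ i → i ≤ k → S i ∈ T') ∧
    F = fun x => f x a * (f (compSeq S k x) b) ^ q

/-- The family `𝒞` of measures: the smallest family containing `μ` and all `μ̂_t`, `t ∈ [0,1]`,
and closed under pushforward by maps in `𝐓'`. -/
inductive MemC [MeasurableSpace X] (μ : Measure X) (μhat : ℝ → Measure X)
    (T' : Set (X → X)) : Measure X → Prop
  | base : MemC μ μhat T' μ
  | hat (t : ℝ) (ht : t ∈ Set.Icc (0:ℝ) 1) : MemC μ μhat T' (μhat t)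
  | push (ν : Measure X) (S : X → X) (hS : S ∈ T') (hν : MemC μ μhat T' ν) :
      MemC μ μhat T' (ν.map S)

/-- Condition (I): polynomial memory loss / decay of correlations, uniformly over the
family `𝒞` and over compositions of maps from `𝐓'`. -/
def CondI {d : ℕ} [MeasurableSpace X] (T : ℕ → ℕ → X → X) (γ : ℝ → X → X)
    (μ : Measure X) (μhat : ℝ → Measure X) (f : X → Fin d → ℝ)
    (C φ : ℝ) (n₁ : ℕ) : Prop :=
  ∀ F : X → ℝ, IsFform f (Tprime T γ) F →
    ∀ ν₁ ν₂ : Measure X, MemC μ μhat (Tprime T γ) ν₁ → MemC μ μhat (Tprime T γ) ν₂ →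
      ∀ S : ℕ → X → X, (∀ i, 1 ≤ i → S i ∈ Tprime T γ) →
        ∀ n m : ℕ, n + n₁ ≤ m → ∀ (α : Fin d) (p : ℕ), p ≤ 1 →
          |(∫ x, (f (compSeq S n x) α) ^ p * F (compSeq S m x) ∂ν₁) -
              (∫ x, (f (compSeq S n x) α) ^ p ∂ν₁) * ∫ x, F (compSeq S m x) ∂ν₂| ≤
            C * ((m : ℝ) - (n : ℝ)) ^ (-φ)

/-- Condition (II): perturbation estimates with exponent `ψ`. -/
def CondII {d : ℕ} [MeasurableSpace X] (T : ℕ → ℕ → X → X) (γ : ℝ → X → X)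
    (μ : Measure X) (μhat : ℝ → Measure X) (f : X → Fin d → ℝ) (C ψ : ℝ) : Prop :=
  (∀ F : X → ℝ, IsFform f (Tprime T γ) F →
    ∀ ν : Measure X, MemC μ μhat (Tprime T γ) ν →
      ∀ k m n : ℕ, k + m ≤ n → ∀ (α : Fin d) (p : ℕ), p ≤ 1 →
        |∫ x, (f x α) ^ p * (F (rowComp T n m k x) - F (gammaRow γ n m k x)) ∂ν| ≤
          C * (k : ℝ) * (n : ℝ) ^ (-ψ)) ∧
  (∀ F : X → ℝ, IsFform f (Tprime T γ) F →
    ∀ s ∈ Set.Icc (0:ℝ) 1, ∀ (k : ℕ) (r : ℕ → ℝ),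
      (∀ l, 1 ≤ l → l ≤ k → r l ∈ Set.Icc (0:ℝ) 1) →
      ∀ (α : Fin d) (p : ℕ), p ≤ 1 → ∀ M : ℝ, 0 ≤ M → (∀ l, 1 ≤ l → l ≤ k → |s - r l| ≤ M) →
        |∫ x, (f x α) ^ p * (F ((γ s)^[k] x) - F (gammaSeq γ r k x)) ∂(μhat s)| ≤
          C * (k : ℝ) * M ^ ψ)

/-- The fluctuation process `ξ_n(x,t) = √n ∫_0^t f̄^{n,⌊nr⌋}(x) dr`. -/
def xiQ {d : ℕ} [MeasurableSpace X] (T : ℕ → ℕ → X → X) (μ : Measure X)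
    (f : X → Fin d → ℝ) (n : ℕ) (t : ℝ) (x : X) : Fin d → ℝ :=
  fun α => Real.sqrt n * ∫ r in (0:ℝ)..t,
    (f (rowComp T n 0 ⌊(n:ℝ) * r⌋₊ x) α - ∫ y, f (rowComp T n 0 ⌊(n:ℝ) * r⌋₊ y) α ∂μ)

/-- The covariance matrix `Σ_{n,t} = μ[ξ_n(t) ⊗ ξ_n(t)]`. -/
def SigNt {d : ℕ} [MeasurableSpace X] (T : ℕ → ℕ → X → X) (μ : Measure X)
    (f : X → Fin d → ℝ) (n : ℕ) (t : ℝ) : Matrix (Fin d) (Fin d) ℝ :=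
  Matrix.of fun α β => ∫ x, xiQ T μ f n t x α * xiQ T μ f n t x β ∂μ

/-- The centered observable `f̂_{α,t} = f_α − μ̂_t(f_α)`. -/
def fhatQ {d : ℕ} [MeasurableSpace X] (μhat : ℝ → Measure X) (f : X → Fin d → ℝ)
    (α : Fin d) (t : ℝ) (x : X) : ℝ :=
  f x α - ∫ y, f y α ∂(μhat t)

/-- `Σ̂_t(f)`, defined as the limit (if it exists) of the covariance matrices of the scaled
Birkhoff sums `m^{-1/2} Σ_{k<m} f̂_t ∘ γ_t^k` with respect to `μ̂_t`. -/
def SigHat {d : ℕ} [MeasurableSpace X] (γ : ℝ → X → X) (μhat : ℝ → Measure X)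
    (f : X → Fin d → ℝ) (t : ℝ) : Matrix (Fin d) (Fin d) ℝ :=
  Matrix.of fun α β => limUnder atTop (fun m : ℕ =>
    ∫ x, ((Real.sqrt m)⁻¹ * ∑ k ∈ Finset.range m, fhatQ μhat f α t ((γ t)^[k] x)) *
         ((Real.sqrt m)⁻¹ * ∑ k ∈ Finset.range m, fhatQ μhat f β t ((γ t)^[k] x)) ∂(μhat t))

/-- `Σ_t = ∫_0^t Σ̂_s(f) ds`. -/
def SigT {d : ℕ} [MeasurableSpace X] (γ : ℝ → X → X) (μhat : ℝ → Measure X)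
    (f : X → Fin d → ℝ) (t : ℝ) : Matrix (Fin d) (Fin d) ℝ :=
  Matrix.of fun α β => ∫ s in (0:ℝ)..t, SigHat γ μhat f s α β

/-- The standard Gaussian on `ℝ^d`. -/
def stdGaussianPi (d : ℕ) : Measure (Fin d → ℝ) :=
  Measure.pi fun _ => gaussianReal 0 1

/-- The positive semidefinite square root (removed from Mathlib; old definition restored). -/
def Matrix.PosSemidef.sqrt {n : Type*} [Fintype n] [DecidableEq n]
    {A : Matrix n n ℝ} (hA : A.PosSemidef) : Matrix n n ℝ :=
  hA.1.eigenvectorUnitary * Matrix.diagonal ((fun x => Real.sqrt x) ∘ hA.1.eigenvalues) *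
    (star hA.1.eigenvectorUnitary : Matrix n n ℝ)

/-- The centered `d`-dimensional normal distribution `N(0, S)`
(junk value `0` if `S` is not positive semidefinite). -/
def gaussianOfMatrix {d : ℕ} (S : Matrix (Fin d) (Fin d) ℝ) : Measure (Fin d → ℝ) :=
  if h : S.PosSemidef then (stdGaussianPi d).map h.sqrt.mulVec else 0

/-- `Φ_S(h)`: the expectation of `h` with respect to `N(0, S)`. -/
def PhiGauss {d : ℕ} (S : Matrix (Fin d) (Fin d) ℝ) (h : (Fin d → ℝ) → ℝ) : ℝ :=
  ∫ z, h z ∂(gaussianOfMatrix S)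

end


noncomputable section
variable {X : Type*}

lemma compSeq_congr {S S' : ℕ → X → X} {k : ℕ} (h : ∀ i, 1 ≤ i → i ≤ k → S i = S' i) :
    compSeq S k = compSeq S' k := by
  induction k with
  | zero => rfl
  | succ k ih =>
    simp only [compSeq, h (k+1) (by omega) le_rfl,
      ih fun i h1 h2 => h i h1 (by omega)]

lemma rowComp_eq_compSeq (T : ℕ → ℕ → X → X) (n m k : ℕ) :
    rowComp T n m k = compSeq (fun i => T n (m + i)) k := by
  induction k with
  | zero => rfl
  | succ k ih => simp only [rowComp, compSeq, ih, Nat.add_assoc]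

lemma compSeq_const (g : X → X) (k : ℕ) : compSeq (fun _ => g) k = g^[k] := by
  induction k with
  | zero => rfl
  | succ k ih => simp only [compSeq, ih, Function.iterate_succ']

lemma gammaSeq_eq_compSeq (γ : ℝ → X → X) (r : ℕ → ℝ) (k : ℕ) :
    gammaSeq γ r k = compSeq (fun i => γ (r i)) k := by
  induction k with
  | zero => rfl
  | succ k ih => simp only [gammaSeq, compSeq, ih]

lemma gammaRow_eq_compSeq (γ : ℝ → X → X) (n m k : ℕ) :
    gammaRow γ n m k = compSeq (fun i => γ (((m + i : ℕ) : ℝ) / (n : ℝ))) k := by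
  induction k with
  | zero => rfl
  | succ k ih =>
    simp only [gammaRow, compSeq, ih]
    norm_num [Nat.cast_add, add_assoc]

lemma rowComp_add (T : ℕ → ℕ → X → X) (n a b : ℕ) :
    rowComp T n 0 (a + b) = rowComp T n a b ∘ rowComp T n 0 a := by
  induction b with
  | zero => rfl
  | succ b ih =>
    show rowComp T n 0 (a + b + 1) = _
    simp only [rowComp, ih]
    have : 0 + (a + b) + 1 = a + b + 1 := by omega
    rw [this]
    rfl

lemma measurable_compSeq [MeasurableSpace X] {S : ℕ → X → X} {k : ℕ}
    (h : ∀ i, 1 ≤ i → i ≤ k → Measurable (S i)) : Measurable (compSeq S k) := by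
  induction k with
  | zero => exact measurable_id
  | succ k ih =>
    exact (h (k+1) (by omega) le_rfl).comp (ih fun i h1 h2 => h i h1 (by omega))

end
set_option maxHeartbeats 2000000 in
/-- **Lemma 4.1** (conditions (f1)–(f3) for abstract QDS): conditions (I) and (II) imply
polynomial decay of correlations (f1), Hölder dependence `t ↦ μ̂_t(F)` with exponent
`θ₂ = φψ/(1+φ)` (f2), and convergence `μ_{n,⌊ns⌋}(F) → μ̂_s(F)` at rate `n^{−θ₃}`,
`θ₃ = φψ/(φ+ψ+1)`, for `s > c₀ n^{η₃−1}` where `η₃ = ψ/(φ+ψ+1) < 1/3` (f3). -/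
theorem qds_conditions_f1_f2_f3
    {X : Type*} [MeasurableSpace X] [TopologicalSpace (X → X)] {d : ℕ}
    (T : ℕ → ℕ → X → X) (γ : ℝ → X → X) (μ : Measure X) (μhat : ℝ → Measure X)
    (f : X → Fin d → ℝ)
    (hμP : IsProbabilityMeasure μ) (hμhatP : ∀ t, IsProbabilityMeasure (μhat t))
    (hT : ∀ n k, Measurable (T n k)) (hγ : ∀ t, Measurable (γ t))
    (hinv : ∀ t ∈ Set.Icc (0:ℝ) 1, (μhat t).map (γ t) = μhat t)
    (hf : Measurable f) (B : ℝ) (hfB : ∀ x α, |f x α| ≤ B)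
    (hQDS : ∀ t ∈ Set.Icc (0:ℝ) 1,
      Tendsto (fun n : ℕ => T n ⌊(n:ℝ) * t⌋₊) atTop (nhds (γ t)))
    (C₀ φ ψ : ℝ) (n₁ : ℕ) (hC₀ : 0 < C₀) (hφ : 1 < φ) (hn₁ : 1 ≤ n₁)
    (hψ : ψ ∈ Set.Ioc (0:ℝ) 1)
    (hI : CondI T γ μ μhat f C₀ φ n₁) (hII : CondII T γ μ μhat f C₀ ψ) :
    ψ / (φ + ψ + 1) < 1/3 ∧
    ∃ C > 0, ∃ c₀ > 0,
      (∀ n k l : ℕ, k ≤ n → l ≤ n → (n₁ : ℤ) ≤ |(k : ℤ) - (l : ℤ)| → ∀ α β : Fin d,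
        |∫ x, (f (rowComp T n 0 k x) α - ∫ y, f (rowComp T n 0 k y) α ∂μ) *
              (f (rowComp T n 0 l x) β - ∫ y, f (rowComp T n 0 l y) β ∂μ) ∂μ| ≤
          C * |(k : ℝ) - (l : ℝ)| ^ (-φ)) ∧
      (∀ s ∈ Set.Icc (0:ℝ) 1, ∀ k : ℕ, n₁ ≤ k → ∀ α β : Fin d,
        |∫ x, fhatQ μhat f α s x * fhatQ μhat f β s ((γ s)^[k] x) ∂(μhat s)| ≤
          C * (k : ℝ) ^ (-φ)) ∧
      (∀ F : X → ℝ, IsFform f (Tprime T γ) F →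
        ∀ r ∈ Set.Icc (0:ℝ) 1, ∀ s ∈ Set.Icc (0:ℝ) 1,
          |(∫ x, F x ∂(μhat r)) - ∫ x, F x ∂(μhat s)| ≤
            C * |r - s| ^ (φ * ψ / (1 + φ))) ∧
      (∀ F : X → ℝ, IsFform f (Tprime T γ) F →
        ∀ n : ℕ, 1 ≤ n → ∀ s : ℝ, c₀ * (n : ℝ) ^ (ψ / (φ + ψ + 1) - 1) < s → s ≤ 1 →
          |(∫ x, F (rowComp T n 0 ⌊(n:ℝ) * s⌋₊ x) ∂μ) - ∫ x, F x ∂(μhat s)| ≤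
            C * (n : ℝ) ^ (-(φ * ψ / (φ + ψ + 1)))) := by

  classical
  have hTpm : ∀ g ∈ Tprime T γ, Measurable g := by
    rintro g (⟨n, k, h1, h2, rfl⟩ | ⟨t, ht, rfl⟩)
    · exact hT n k
    · exact hγ t
  have hprob : ∀ ν : Measure X, MemC μ μhat (Tprime T γ) ν → IsProbabilityMeasure ν := by
    intro ν hν
    induction hν with
    | base => exact hμP
    | hat t ht => exact hμhatP t
    | push ν S hS hν ih => exact Measure.isProbabilityMeasure_map (hTpm S hS).aemeasurable
  have hXne : Nonempty X := by
    by_contra h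
    rw [not_nonempty_iff] at h
    have h1 := hμP.measure_univ
    rw [Set.univ_eq_empty_iff.2 h, measure_empty] at h1
    exact zero_ne_one h1
  have hB0 : ∀ _ : Fin d, 0 ≤ B := fun α => le_trans (abs_nonneg _) (hfB hXne.some α)
  have hIntB : ∀ (g : X → ℝ) (M : ℝ), Measurable g → (∀ x, |g x| ≤ M) →
      ∀ ν : Measure X, IsProbabilityMeasure ν → Integrable g ν := by
    intro g M hg hM ν hν
    exact ⟨hg.aestronglyMeasurable,
      HasFiniteIntegral.of_bounded (C := M) (ae_of_all _ fun x => by simpa using hM x)⟩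
  have hFprop : ∀ F : X → ℝ, IsFform f (Tprime T γ) F →
      Measurable F ∧ ∀ x, |F x| ≤ B * (B + 1) := by
    rintro F ⟨a, b, q, k, S, hq, hS, rfl⟩
    have hcs : Measurable (compSeq S k) :=
      measurable_compSeq fun i h1 h2 => hTpm _ (hS i h1 h2)
    have hB : 0 ≤ B := hB0 a
    refine ⟨((measurable_pi_apply a).comp hf).mul
      ((((measurable_pi_apply b).comp hf).comp hcs).pow_const q), fun x => ?_⟩
    rw [abs_mul, abs_pow]
    have h2 : |f (compSeq S k x) b| ^ q ≤ B + 1 := by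
      interval_cases q
      · simp; linarith
      · simpa using le_trans (hfB _ b) (by linarith)
    exact mul_le_mul (hfB x a) h2 (by positivity) hB
  have hfαm : ∀ (g : X → X), Measurable g → ∀ α : Fin d, Measurable fun x => f (g x) α :=
    fun g hg α => ((measurable_pi_apply α).comp hf).comp hg
  have hRowM : ∀ n m k, Measurable (rowComp T n m k) := by
    intro n m k
    rw [rowComp_eq_compSeq]
    exact measurable_compSeq fun i _ _ => hT n _
  have hmapint : ∀ (g : X → X), Measurable g → ∀ F : X → ℝ, Measurable F →
      ∀ ν : Measure X, ∫ x, F x ∂(ν.map g) = ∫ x, F (g x) ∂ν :=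
    fun g hg F hF ν => integral_map hg.aemeasurable hF.aestronglyMeasurable
  have hinv_iter : ∀ s ∈ Set.Icc (0:ℝ) 1, ∀ m : ℕ, (μhat s).map ((γ s)^[m]) = μhat s := by
    intro s hs m
    induction m with
    | zero => simp
    | succ m ih =>
      rw [Function.iterate_succ', ← Measure.map_map (hγ s) ((hγ s).iterate m), ih, hinv s hs]
  have hinv_int : ∀ s ∈ Set.Icc (0:ℝ) 1, ∀ (m : ℕ) (F : X → ℝ), Measurable F →
      ∫ x, F ((γ s)^[m] x) ∂(μhat s) = ∫ x, F x ∂(μhat s) := by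
    intro s hs m F hF
    conv_rhs => rw [← hinv_iter s hs m]
    exact (hmapint _ ((hγ s).iterate m) F hF _).symm
  have hMemRow : ∀ n j : ℕ, 1 ≤ n → j ≤ n →
      MemC μ μhat (Tprime T γ) (μ.map (rowComp T n 0 j)) := by
    intro n j hn
    induction j with
    | zero =>
      intro _
      have : rowComp T n 0 0 = (id : X → X) := rfl
      rw [this, Measure.map_id]
      exact MemC.base
    | succ j ih =>
      intro hj
      have h1 : rowComp T n 0 (j+1) = T n (j+1) ∘ rowComp T n 0 j := by
        show T n (0+j+1) ∘ rowComp T n 0 j = _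
        rw [Nat.zero_add]
      rw [h1, ← Measure.map_map (hT n (j+1)) (hRowM n 0 j)]
      exact MemC.push _ _ (Or.inl ⟨n, j+1, hn, hj, rfl⟩) (ih (by omega))
  have cov_expand : ∀ (g h : X → ℝ) (a b : ℝ) (ν : Measure X), IsProbabilityMeasure ν →
      Integrable g ν → Integrable h ν → Integrable (fun x => g x * h x) ν →
      a = ∫ y, g y ∂ν → b = ∫ y, h y ∂ν →
      ∫ x, (g x - a) * (h x - b) ∂ν = (∫ x, g x * h x ∂ν) - a * b := by
    intro g h a b ν hν hg hh hgh ha hb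
    have I1 : Integrable (fun x => a * h x) ν := hh.const_mul a
    have I2 : Integrable (fun x => b * g x) ν := hg.const_mul b
    have I3 : Integrable (fun x => g x * h x - a * h x) ν := hgh.sub I1
    have I4 : Integrable (fun x => g x * h x - a * h x - b * g x) ν := I3.sub I2
    rw [show (fun x => (g x - a) * (h x - b))
        = (fun x => g x * h x - a * h x - b * g x + a * b) from funext fun x => by ring,
      integral_add I4 (integrable_const (a * b)), integral_sub I3 I2, integral_sub hgh I1,
      integral_const_mul, integral_const_mul, integral_const]
    simp only [measure_univ, probReal_univ, smul_eq_mul, one_mul]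
    rw [← ha, ← hb]
    ring
  have hn₁R : (1:ℝ) ≤ (n₁:ℝ) := by exact_mod_cast hn₁
  have Fβ : ∀ β : Fin d, IsFform f (Tprime T γ) (fun y => f y β * 1) := by
    intro β
    exact ⟨β, β, 0, 0, fun _ => id, by norm_num, fun i h1 h2 => absurd (le_trans h1 h2) (by norm_num),
      by funext x; simp [compSeq]⟩
  have hIntf : ∀ (g : X → X), Measurable g → ∀ (α : Fin d) (ν : Measure X),
      IsProbabilityMeasure ν → Integrable (fun x => f (g x) α) ν :=
    fun g hg α ν hν => hIntB _ B (hfαm g hg α) (fun x => hfB _ α) ν hν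
  have hIntff : ∀ (g g' : X → X), Measurable g → Measurable g' → ∀ (α β : Fin d) (ν : Measure X),
      IsProbabilityMeasure ν → Integrable (fun x => f (g x) α * f (g' x) β) ν :=
    fun g g' hg hg' α β ν hν => hIntB _ (B * B) ((hfαm g hg α).mul (hfαm g' hg' β))
      (fun x => by rw [Pi.mul_apply, abs_mul]; exact mul_le_mul (hfB _ _) (hfB _ _) (abs_nonneg _) (hB0 α)) ν hν
  have key1 : ∀ n k l : ℕ, k ≤ n → l ≤ n → k + n₁ ≤ l → ∀ α β : Fin d,
      |∫ x, (f (rowComp T n 0 k x) α - ∫ y, f (rowComp T n 0 k y) α ∂μ) *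
            (f (rowComp T n 0 l x) β - ∫ y, f (rowComp T n 0 l y) β ∂μ) ∂μ| ≤
        C₀ * ((l:ℝ) - (k:ℝ)) ^ (-φ) := by
    intro n k l hk hl hkl α β
    have hn : 1 ≤ n := le_trans (by omega) hl
    set S : ℕ → X → X := fun i => T n (min i n) with hS
    have hSc : ∀ j, j ≤ n → compSeq S j = rowComp T n 0 j := by
      intro j hj
      rw [rowComp_eq_compSeq]
      exact compSeq_congr fun i h1 h2 => by
        simp only [hS, Nat.min_eq_left (le_trans h2 hj), Nat.zero_add]
    have hmem : ∀ i, 1 ≤ i → S i ∈ Tprime T γ :=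
      fun i _ => Or.inl ⟨n, min i n, hn, min_le_right _ _, rfl⟩
    have hIb := hI (fun y => f y β * 1) (Fβ β) μ μ MemC.base MemC.base S hmem k l hkl α 1 le_rfl
    simp only [pow_one, mul_one, hSc k hk, hSc l hl] at hIb
    rw [show (∫ x, (f (rowComp T n 0 k x) α - ∫ y, f (rowComp T n 0 k y) α ∂μ) *
            (f (rowComp T n 0 l x) β - ∫ y, f (rowComp T n 0 l y) β ∂μ) ∂μ)
        = (∫ x, f (rowComp T n 0 k x) α * f (rowComp T n 0 l x) β ∂μ) -
          (∫ x, f (rowComp T n 0 k x) α ∂μ) * ∫ x, f (rowComp T n 0 l x) β ∂μ from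
      cov_expand _ _ _ _ μ hμP (hIntf _ (hRowM n 0 k) α μ hμP) (hIntf _ (hRowM n 0 l) β μ hμP)
        (hIntff _ _ (hRowM n 0 k) (hRowM n 0 l) α β μ hμP) rfl rfl]
    exact hIb
  have key2 : ∀ s ∈ Set.Icc (0:ℝ) 1, ∀ k : ℕ, n₁ ≤ k → ∀ α β : Fin d,
      |∫ x, fhatQ μhat f α s x * fhatQ μhat f β s ((γ s)^[k] x) ∂(μhat s)| ≤
        C₀ * (k : ℝ) ^ (-φ) := by
    intro s hs k hk α β
    haveI := hμhatP s
    have hmem : ∀ i, 1 ≤ i → (fun _ : ℕ => γ s) i ∈ Tprime T γ := fun i _ => Or.inr ⟨s, hs, rfl⟩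
    have hIb := hI (fun y => f y β * 1) (Fβ β) (μhat s) (μhat s) (MemC.hat s hs) (MemC.hat s hs)
      (fun _ => γ s) hmem 0 k (by omega) α 1 le_rfl
    simp only [pow_one, mul_one, compSeq_const, Function.iterate_zero, id_eq,
      Nat.cast_zero, sub_zero] at hIb
    have e2 : ∫ y, f ((γ s)^[k] y) β ∂(μhat s) = ∫ y, f y β ∂(μhat s) :=
      hinv_int s hs k (fun y => f y β) ((measurable_pi_apply β).comp hf)
    rw [e2] at hIb
    rw [show (∫ x, fhatQ μhat f α s x * fhatQ μhat f β s ((γ s)^[k] x) ∂(μhat s))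
        = (∫ x, f x α * f ((γ s)^[k] x) β ∂(μhat s)) -
          (∫ y, f y α ∂(μhat s)) * ∫ y, f y β ∂(μhat s) from by
      simp only [fhatQ]
      exact cov_expand (fun x => f x α) (fun x => f ((γ s)^[k] x) β) _ _ (μhat s) (hμhatP s)
        (hIntB _ B ((measurable_pi_apply α).comp hf) (fun x => hfB _ α) _ (hμhatP s))
        (hIntf _ ((hγ s).iterate k) β _ (hμhatP s))
        (hIntff _ _ measurable_id ((hγ s).iterate k) α β _ (hμhatP s)) rfl e2.symm]
    exact hIb
  have hGRM : ∀ n m k, Measurable (gammaRow γ n m k) := by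
    intro n m k
    rw [gammaRow_eq_compSeq]
    exact measurable_compSeq fun i _ _ => hγ _
  have key3 : ∀ F : X → ℝ, IsFform f (Tprime T γ) F → ∀ r ∈ Set.Icc (0:ℝ) 1,
      ∀ s ∈ Set.Icc (0:ℝ) 1,
      |(∫ x, F x ∂(μhat r)) - ∫ x, F x ∂(μhat s)| ≤
        (C₀ * ((n₁:ℝ) + 3)) * |r - s| ^ (φ * ψ / (1 + φ)) := by
    intro F hF r hr s hs
    haveI := hμhatP r
    haveI := hμhatP s
    obtain ⟨hFm, hFb⟩ := hFprop F hF
    obtain ⟨a, -⟩ := id hF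
    have IntF : ∀ (g : X → X), Measurable g → ∀ ν : Measure X, IsProbabilityMeasure ν →
        Integrable (fun x => F (g x)) ν :=
      fun g hg ν hν => hIntB _ (B * (B + 1)) (hFm.comp hg) (fun x => hFb _) ν hν
    by_cases hrs : r = s
    · subst hrs
      rw [sub_self, abs_zero]
      positivity
    have hε : 0 < |r - s| := abs_pos.2 (sub_ne_zero.2 hrs)
    set ε := |r - s| with hεdef
    have hε1 : ε ≤ 1 := by
      rw [hεdef, abs_sub_le_iff]
      constructor <;> linarith [hr.1, hr.2, hs.1, hs.2]
    have h1φ : (0:ℝ) < 1 + φ := by linarith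
    set t := ε ^ (-(ψ / (1 + φ))) with ht
    have ht1 : 1 ≤ t :=
      Real.one_le_rpow_of_pos_of_le_one_of_nonpos hε hε1
        (by rw [neg_nonpos]; exact div_nonneg hψ.1.le h1φ.le)
    have ht0 : 0 < t := lt_of_lt_of_le one_pos ht1
    set k := n₁ + ⌈t⌉₊ with hkd
    have hkt : t ≤ (k:ℝ) := le_trans (Nat.le_ceil t) (by
      rw [hkd]; push_cast; linarith [Nat.cast_nonneg (α := ℝ) n₁])
    have hkub : (k:ℝ) ≤ ((n₁:ℝ) + 2) * t := by
      have h2 : (⌈t⌉₊:ℝ) < t + 1 := Nat.ceil_lt_add_one ht0.le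
      rw [hkd]; push_cast; nlinarith
    -- step A : invariance at r
    have eA : ∫ x, F x ∂(μhat r) = ∫ x, F ((γ r)^[k] x) ∂(μhat r) := (hinv_int r hr k F hFm).symm
    -- step B : condition (II)(2)
    have hB2 := hII.2 F hF r hr k (fun _ => s) (fun l _ _ => hs) a 0 (by norm_num) ε hε.le
      (fun l _ _ => le_rfl)
    have hgseq : gammaSeq γ (fun _ => s) k = (γ s)^[k] := by
      rw [gammaSeq_eq_compSeq]; exact compSeq_const _ _
    simp only [pow_zero, one_mul, hgseq] at hB2
    rw [integral_sub (IntF _ ((hγ r).iterate k) _ (hμhatP r))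
      (IntF _ ((hγ s).iterate k) _ (hμhatP r))] at hB2
    -- step C : condition (I)
    have hmem : ∀ i, 1 ≤ i → (fun _ : ℕ => γ s) i ∈ Tprime T γ := fun i _ => Or.inr ⟨s, hs, rfl⟩
    have hCc := hI F hF (μhat r) (μhat s) (MemC.hat r hr) (MemC.hat s hs) (fun _ => γ s) hmem
      0 k (by omega) a 0 (by norm_num)
    simp only [pow_zero, one_mul, compSeq_const, integral_const, measure_univ,
      probReal_univ, smul_eq_mul, Nat.cast_zero, sub_zero] at hCc
    -- step D : invariance at s
    have eD : ∫ x, F ((γ s)^[k] x) ∂(μhat s) = ∫ x, F x ∂(μhat s) := hinv_int s hs k F hFm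
    -- combine
    have hsum : |(∫ x, F x ∂(μhat r)) - ∫ x, F x ∂(μhat s)| ≤
        C₀ * (k:ℝ) * ε ^ ψ + C₀ * (k:ℝ) ^ (-φ) := by
      calc |(∫ x, F x ∂(μhat r)) - ∫ x, F x ∂(μhat s)|
          = |(∫ x, F ((γ r)^[k] x) ∂(μhat r)) - ∫ x, F ((γ s)^[k] x) ∂(μhat s)| := by
            rw [← eA, ← eD]
        _ ≤ |(∫ x, F ((γ r)^[k] x) ∂(μhat r)) - ∫ x, F ((γ s)^[k] x) ∂(μhat r)| +
            |(∫ x, F ((γ s)^[k] x) ∂(μhat r)) - ∫ x, F ((γ s)^[k] x) ∂(μhat s)| :=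
            abs_sub_le _ _ _
        _ ≤ C₀ * (k:ℝ) * ε ^ ψ + C₀ * (k:ℝ) ^ (-φ) := add_le_add hB2 hCc
    -- numerics
    have hεψ : t * ε ^ ψ = ε ^ (φ * ψ / (1 + φ)) := by
      rw [ht, ← Real.rpow_add hε]
      congr 1
      field_simp
      ring
    have htφ : t ^ (-φ) = ε ^ (φ * ψ / (1 + φ)) := by
      rw [ht, ← Real.rpow_mul hε.le]
      congr 1
      field_simp
    have hkφ : (k:ℝ) ^ (-φ) ≤ ε ^ (φ * ψ / (1 + φ)) := by
      rw [← htφ]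
      exact Real.rpow_le_rpow_of_nonpos ht0 hkt (by linarith)
    have hkεψ : (k:ℝ) * ε ^ ψ ≤ ((n₁:ℝ) + 2) * ε ^ (φ * ψ / (1 + φ)) := by
      calc (k:ℝ) * ε ^ ψ ≤ (((n₁:ℝ) + 2) * t) * ε ^ ψ :=
            mul_le_mul_of_nonneg_right hkub (Real.rpow_nonneg hε.le ψ)
        _ = ((n₁:ℝ) + 2) * (t * ε ^ ψ) := by ring
        _ = ((n₁:ℝ) + 2) * ε ^ (φ * ψ / (1 + φ)) := by rw [hεψ]
    have hC1 := mul_le_mul_of_nonneg_left hkεψ hC₀.le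
    have hC2 := mul_le_mul_of_nonneg_left hkφ hC₀.le
    calc |(∫ x, F x ∂(μhat r)) - ∫ x, F x ∂(μhat s)| ≤
        C₀ * (k:ℝ) * ε ^ ψ + C₀ * (k:ℝ) ^ (-φ) := hsum
      _ ≤ (C₀ * ((n₁:ℝ) + 3)) * ε ^ (φ * ψ / (1 + φ)) := by
          nlinarith [hC1, hC2]
  have key4 : ∀ F : X → ℝ, IsFform f (Tprime T γ) F → ∀ n : ℕ, 1 ≤ n → ∀ s : ℝ,
      ((n₁:ℝ) + 3) * (n:ℝ) ^ (ψ / (φ + ψ + 1) - 1) < s → s ≤ 1 →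
      |(∫ x, F (rowComp T n 0 ⌊(n:ℝ) * s⌋₊ x) ∂μ) - ∫ x, F x ∂(μhat s)| ≤
        (C₀ * (1 + ((n₁:ℝ) + 2) + ((n₁:ℝ) + 2) ^ 2)) * (n:ℝ) ^ (-(φ * ψ / (φ + ψ + 1))) := by
    intro F hF n hn s hs1 hs2
    haveI := hμhatP s
    obtain ⟨hFm, hFb⟩ := hFprop F hF
    obtain ⟨a, -⟩ := id hF
    have IntF : ∀ (g : X → X), Measurable g → ∀ ν : Measure X, IsProbabilityMeasure ν →
        Integrable (fun x => F (g x)) ν :=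
      fun g hg ν hν => hIntB _ (B * (B + 1)) (hFm.comp hg) (fun x => hFb _) ν hν
    have hψ0 := hψ.1
    set η := ψ / (φ + ψ + 1) with hηd
    set θ := φ * ψ / (φ + ψ + 1) with hθd
    have hSig : (0:ℝ) < φ + ψ + 1 := by linarith
    have hnR : (1:ℝ) ≤ (n:ℝ) := by exact_mod_cast hn
    have hnpos : (0:ℝ) < (n:ℝ) := by linarith
    set N := (n:ℝ) ^ η with hNd
    have hN1 : 1 ≤ N := Real.one_le_rpow hnR (by positivity)
    have hs0 : 0 < s := lt_trans (by positivity) hs1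
    set k := ⌊(n:ℝ) * s⌋₊ with hkd
    have hkn : k ≤ n := by
      have h1 : (n:ℝ) * s ≤ (n:ℝ) := by nlinarith
      calc k ≤ ⌊(n:ℝ)⌋₊ := Nat.floor_le_floor h1
        _ = n := Nat.floor_natCast n
    have hkfl : (k:ℝ) ≤ (n:ℝ) * s := Nat.floor_le (by positivity)
    have hkfl2 : (n:ℝ) * s < (k:ℝ) + 1 := Nat.lt_floor_add_one _
    have hmm : (n:ℝ) ^ η = (n:ℝ) * (n:ℝ) ^ (η - 1) := by
      nth_rewrite 1 [show η = 1 + (η - 1) by ring]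
      rw [Real.rpow_add hnpos, Real.rpow_one]
    have hnsN : ((n₁:ℝ) + 3) * N < (n:ℝ) * s := by
      have h := mul_lt_mul_of_pos_left hs1 hnpos
      calc ((n₁:ℝ) + 3) * N = (n:ℝ) * (((n₁:ℝ) + 3) * (n:ℝ) ^ (η - 1)) := by
            rw [hNd, hmm]; ring
        _ < (n:ℝ) * s := h
    set m := n₁ + ⌈N⌉₊ with hmd
    have hmN : N ≤ (m:ℝ) := le_trans (Nat.le_ceil N) (by
      rw [hmd]; push_cast; linarith [Nat.cast_nonneg (α := ℝ) n₁])
    have hm1 : (m:ℝ) ≤ (n₁:ℝ) + N + 1 := by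
      have := Nat.ceil_lt_add_one (le_trans zero_le_one hN1)
      rw [hmd]; push_cast; linarith
    have hmub : (m:ℝ) ≤ ((n₁:ℝ) + 2) * N := by nlinarith
    have hmkR : (m:ℝ) < (k:ℝ) := by nlinarith
    have hmk : m ≤ k := le_of_lt (by exact_mod_cast hmkR)
    set A := k - m with hAd
    have hAm : A + m = k := by omega
    set ν := μ.map (rowComp T n 0 A) with hνd
    have hνmem : MemC μ μhat (Tprime T γ) ν := hMemRow n A hn (by omega)
    have hνprob := hprob ν hνmem
    haveI := hνprob
    clear_value η θ N k m A ν
    have hsI : s ∈ Set.Icc (0:ℝ) 1 := ⟨hs0.le, hs2⟩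
    -- E1
    have e1 : ∫ x, F (rowComp T n 0 k x) ∂μ = ∫ x, F (rowComp T n A m x) ∂ν := by
      rw [hνd, hmapint (rowComp T n 0 A) (hRowM n 0 A) (fun x => F (rowComp T n A m x))
        (hFm.comp (hRowM n A m)) μ]
      rw [show rowComp T n 0 k = rowComp T n A m ∘ rowComp T n 0 A from by
        rw [← hAm, rowComp_add]]
      rfl
    -- step 1 : condition (II)(1)
    have h21 := hII.1 F hF ν hνmem m A n (by omega) a 0 (by norm_num)
    simp only [pow_zero, one_mul] at h21
    rw [integral_sub (IntF _ (hRowM n A m) ν hνprob) (IntF _ (hGRM n A m) ν hνprob)] at h21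
    -- step 2 : condition (I)
    set S2 : ℕ → X → X := fun i => γ (((A + min i m : ℕ):ℝ) / (n:ℝ)) with hS2d
    have hS2mem : ∀ i, 1 ≤ i → S2 i ∈ Tprime T γ := by
      intro i _
      refine Or.inr ⟨((A + min i m : ℕ):ℝ) / (n:ℝ), ⟨by positivity, ?_⟩, rfl⟩
      rw [div_le_one hnpos]
      exact_mod_cast (show A + min i m ≤ n by omega)
    have hS2c : compSeq S2 m = gammaRow γ n A m := by
      rw [gammaRow_eq_compSeq]
      exact compSeq_congr fun i h1 h2 => by rw [hS2d]; simp only [min_eq_left h2]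
    have h22 := hI F hF ν (μhat s) hνmem (MemC.hat s hsI) S2 hS2mem 0 m (by omega) a 0
      (by norm_num)
    simp only [pow_zero, one_mul, hS2c, integral_const, measure_univ, probReal_univ,
      smul_eq_mul, Nat.cast_zero, sub_zero] at h22
    -- step 3 : condition (II)(2)
    have hrIcc : ∀ l, 1 ≤ l → l ≤ m → ((A + l : ℕ):ℝ) / (n:ℝ) ∈ Set.Icc (0:ℝ) 1 := by
      intro l h1 h2
      refine ⟨by positivity, ?_⟩
      rw [div_le_one hnpos]
      exact_mod_cast (show A + l ≤ n by omega)
    have hrM : ∀ l, 1 ≤ l → l ≤ m → |s - ((A + l : ℕ):ℝ) / (n:ℝ)| ≤ (m:ℝ) / (n:ℝ) := by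
      intro l h1 h2
      have hALk : ((A + l : ℕ):ℝ) ≤ (k:ℝ) := by exact_mod_cast (show A + l ≤ k by omega)
      have hrls : ((A + l : ℕ):ℝ) / (n:ℝ) ≤ s := by
        rw [div_le_iff₀ hnpos]
        calc ((A + l : ℕ):ℝ) ≤ (k:ℝ) := hALk
          _ ≤ (n:ℝ) * s := hkfl
          _ = s * n := mul_comm _ _
      rw [abs_of_nonneg (by linarith)]
      have hkA : (k:ℝ) = (A:ℝ) + (m:ℝ) := by exact_mod_cast hAm.symm
      have hl1 : (1:ℝ) ≤ (l:ℝ) := by exact_mod_cast h1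
      rw [sub_div' hnpos.ne', div_le_div_iff₀ hnpos hnpos]
      push_cast
      nlinarith [hkfl2]
    have h23 := hII.2 F hF s hsI m (fun l => ((A + l : ℕ):ℝ) / (n:ℝ)) hrIcc a 0 (by norm_num)
      ((m:ℝ) / (n:ℝ)) (by positivity) hrM
    have hgsr : gammaSeq γ (fun l => ((A + l : ℕ):ℝ) / (n:ℝ)) m = gammaRow γ n A m := by
      rw [gammaSeq_eq_compSeq, gammaRow_eq_compSeq]
    simp only [pow_zero, one_mul, hgsr] at h23
    rw [integral_sub (IntF _ ((hγ s).iterate m) _ (hμhatP s)) (IntF _ (hGRM n A m) _ (hμhatP s))]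
      at h23
    have e4 : ∫ x, F ((γ s)^[m] x) ∂(μhat s) = ∫ x, F x ∂(μhat s) := hinv_int s hsI m F hFm
    -- combine
    have hsum : |(∫ x, F (rowComp T n 0 k x) ∂μ) - ∫ x, F x ∂(μhat s)| ≤
        C₀ * (m:ℝ) * (n:ℝ) ^ (-ψ) + C₀ * (m:ℝ) ^ (-φ) + C₀ * (m:ℝ) * ((m:ℝ) / (n:ℝ)) ^ ψ := by
      have habs3 : |(∫ x, F (gammaRow γ n A m x) ∂(μhat s)) - ∫ x, F x ∂(μhat s)| ≤
          C₀ * (m:ℝ) * ((m:ℝ) / (n:ℝ)) ^ ψ := by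
        rw [← e4, abs_sub_comm]
        exact h23
      have t1 := abs_sub_le (∫ x, F (rowComp T n A m x) ∂ν)
        (∫ x, F (gammaRow γ n A m x) ∂ν) (∫ x, F x ∂(μhat s))
      have t2 := abs_sub_le (∫ x, F (gammaRow γ n A m x) ∂ν)
        (∫ x, F (gammaRow γ n A m x) ∂(μhat s)) (∫ x, F x ∂(μhat s))
      rw [e1]
      linarith [h21, h22, habs3]
    -- numerics
    have hexp1 : η - ψ ≤ -θ := by
      rw [hηd, hθd, div_sub' hSig.ne', neg_div', div_le_div_iff₀ hSig hSig]
      nlinarith [mul_pos hSig (mul_pos hψ0 hψ0)]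
    have hNψ : N * (n:ℝ) ^ (-ψ) = (n:ℝ) ^ (η - ψ) := by
      rw [hNd, ← Real.rpow_add hnpos, sub_eq_add_neg]
    have b1 : (m:ℝ) * (n:ℝ) ^ (-ψ) ≤ ((n₁:ℝ) + 2) * (n:ℝ) ^ (-θ) := by
      calc (m:ℝ) * (n:ℝ) ^ (-ψ) ≤ (((n₁:ℝ) + 2) * N) * (n:ℝ) ^ (-ψ) :=
            mul_le_mul_of_nonneg_right hmub (Real.rpow_nonneg hnpos.le _)
        _ = ((n₁:ℝ) + 2) * ((n:ℝ) ^ (η - ψ)) := by rw [← hNψ]; ring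
        _ ≤ ((n₁:ℝ) + 2) * (n:ℝ) ^ (-θ) := by
            have := Real.rpow_le_rpow_of_exponent_le hnR hexp1
            nlinarith [this]
    have hNθ : N ^ (-φ) = (n:ℝ) ^ (-θ) := by
      rw [hNd, ← Real.rpow_mul hnpos.le]
      congr 1
      rw [hηd, hθd]
      ring
    have b2 : (m:ℝ) ^ (-φ) ≤ (n:ℝ) ^ (-θ) := by
      rw [← hNθ]
      exact Real.rpow_le_rpow_of_nonpos (by linarith) hmN (by linarith)
    have hexp3 : η + η * ψ - ψ = -θ := by
      rw [hηd, hθd]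
      field_simp
      ring
    have hNNψ : N * N ^ ψ * (n:ℝ) ^ (-ψ) = (n:ℝ) ^ (-θ) := by
      rw [hNd, ← Real.rpow_mul hnpos.le, ← Real.rpow_add hnpos, ← Real.rpow_add hnpos, ← hexp3,
        sub_eq_add_neg]
    have hn12ψ : ((n₁:ℝ) + 2) ^ ψ ≤ (n₁:ℝ) + 2 := by
      have h := Real.rpow_le_rpow_of_exponent_le (show (1:ℝ) ≤ (n₁:ℝ) + 2 by linarith) hψ.2
      rwa [Real.rpow_one] at h
    have b3 : (m:ℝ) * ((m:ℝ) / (n:ℝ)) ^ ψ ≤ ((n₁:ℝ) + 2) ^ 2 * (n:ℝ) ^ (-θ) := by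
      have hdiv : (m:ℝ) / (n:ℝ) ≤ (((n₁:ℝ) + 2) * N) / (n:ℝ) := (div_le_div_iff_of_pos_right hnpos).2 hmub
      calc (m:ℝ) * ((m:ℝ) / (n:ℝ)) ^ ψ
          ≤ (((n₁:ℝ) + 2) * N) * ((((n₁:ℝ) + 2) * N) / (n:ℝ)) ^ ψ := by
            apply mul_le_mul hmub (Real.rpow_le_rpow (by positivity) hdiv hψ0.le)
              (Real.rpow_nonneg (by positivity) _) (by positivity)
        _ = (((n₁:ℝ) + 2) * ((n₁:ℝ) + 2) ^ ψ) * (N * N ^ ψ * (n:ℝ) ^ (-ψ)) := by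
            rw [Real.div_rpow (by positivity) hnpos.le,
              Real.mul_rpow (by positivity) (by positivity), Real.rpow_neg hnpos.le]
            ring
        _ ≤ (((n₁:ℝ) + 2) * ((n₁:ℝ) + 2)) * (N * N ^ ψ * (n:ℝ) ^ (-ψ)) := by
            have hfac : (0:ℝ) ≤ N * N ^ ψ * (n:ℝ) ^ (-ψ) := by positivity
            exact mul_le_mul_of_nonneg_right
              (mul_le_mul_of_nonneg_left hn12ψ (by linarith : (0:ℝ) ≤ (n₁:ℝ) + 2)) hfac
        _ = ((n₁:ℝ) + 2) ^ 2 * (n:ℝ) ^ (-θ) := by rw [hNNψ]; ring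
    have c1 := mul_le_mul_of_nonneg_left b1 hC₀.le
    have c2 := mul_le_mul_of_nonneg_left b2 hC₀.le
    have c3 := mul_le_mul_of_nonneg_left b3 hC₀.le
    calc |(∫ x, F (rowComp T n 0 k x) ∂μ) - ∫ x, F x ∂(μhat s)|
        ≤ C₀ * (m:ℝ) * (n:ℝ) ^ (-ψ) + C₀ * (m:ℝ) ^ (-φ) + C₀ * (m:ℝ) * ((m:ℝ) / (n:ℝ)) ^ ψ :=
          hsum
      _ ≤ (C₀ * (1 + ((n₁:ℝ) + 2) + ((n₁:ℝ) + 2) ^ 2)) * (n:ℝ) ^ (-θ) := by nlinarith [c1, c2, c3]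
  have hCC : C₀ ≤ C₀ * ((n₁:ℝ) + 3) ^ 2 := by
    nlinarith [mul_le_mul_of_nonneg_left (show (1:ℝ) ≤ ((n₁:ℝ) + 3) ^ 2 by nlinarith [hn₁R]) hC₀.le]
  have hCC2 : C₀ * ((n₁:ℝ) + 3) ≤ C₀ * ((n₁:ℝ) + 3) ^ 2 := by
    nlinarith [mul_le_mul_of_nonneg_left
      (show ((n₁:ℝ) + 3) ≤ ((n₁:ℝ) + 3) ^ 2 by nlinarith [hn₁R]) hC₀.le]
  have hCC3 : C₀ * (1 + ((n₁:ℝ) + 2) + ((n₁:ℝ) + 2) ^ 2) ≤ C₀ * ((n₁:ℝ) + 3) ^ 2 := by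
    nlinarith [mul_le_mul_of_nonneg_left
      (show (1 + ((n₁:ℝ) + 2) + ((n₁:ℝ) + 2) ^ 2) ≤ ((n₁:ℝ) + 3) ^ 2 by nlinarith [hn₁R]) hC₀.le]
  refine ⟨?_, C₀ * ((n₁:ℝ) + 3) ^ 2, by positivity, (n₁:ℝ) + 3, by positivity, ?_, ?_, ?_, ?_⟩
  · rw [div_lt_div_iff₀ (by linarith [hψ.1]) (by norm_num : (0:ℝ) < 3)]
    linarith [hψ.2]
  · intro n k l hk hl hkl α β
    rcases le_total k l with h | h
    · have hkl' : k + n₁ ≤ l := by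
        rcases abs_cases ((k:ℤ) - (l:ℤ)) with ⟨he, _⟩ | ⟨he, _⟩ <;> rw [he] at hkl <;> omega
      have hb := key1 n k l hk hl hkl' α β
      have habs : |(k:ℝ) - (l:ℝ)| = (l:ℝ) - (k:ℝ) := by
        rw [abs_sub_comm, abs_of_nonneg (sub_nonneg.2 (by exact_mod_cast h))]
      rw [habs]
      exact le_trans hb (mul_le_mul_of_nonneg_right hCC
        (Real.rpow_nonneg (sub_nonneg.2 (by exact_mod_cast h)) _))
    · have hkl' : l + n₁ ≤ k := by
        rcases abs_cases ((k:ℤ) - (l:ℤ)) with ⟨he, _⟩ | ⟨he, _⟩ <;> rw [he] at hkl <;> omega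
      have hb := key1 n l k hl hk hkl' β α
      have habs : |(k:ℝ) - (l:ℝ)| = (k:ℝ) - (l:ℝ) :=
        abs_of_nonneg (sub_nonneg.2 (by exact_mod_cast h))
      rw [habs, show (∫ x, (f (rowComp T n 0 k x) α - ∫ y, f (rowComp T n 0 k y) α ∂μ) *
              (f (rowComp T n 0 l x) β - ∫ y, f (rowComp T n 0 l y) β ∂μ) ∂μ)
          = ∫ x, (f (rowComp T n 0 l x) β - ∫ y, f (rowComp T n 0 l y) β ∂μ) *
              (f (rowComp T n 0 k x) α - ∫ y, f (rowComp T n 0 k y) α ∂μ) ∂μ from by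
        congr 1; funext x; ring]
      exact le_trans hb (mul_le_mul_of_nonneg_right hCC
        (Real.rpow_nonneg (sub_nonneg.2 (by exact_mod_cast h)) _))
  · intro s hs k hk α β
    exact le_trans (key2 s hs k hk α β) (mul_le_mul_of_nonneg_right hCC
      (Real.rpow_nonneg (Nat.cast_nonneg k) _))
  · intro F hF r hr s hs
    exact le_trans (key3 F hF r hr s hs) (mul_le_mul_of_nonneg_right hCC2
      (Real.rpow_nonneg (abs_nonneg _) _))
  · intro F hF n hn s hs1 hs2
    exact le_trans (key4 F hF n hn s hs1 hs2) (mul_le_mul_of_nonneg_right hCC3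
      (Real.rpow_nonneg (Nat.cast_nonneg n) _))
end

section
/- For every β* ∈ (0,1/2) there exists a constant b = b(β*) > 0 such that every function h ∈ C*(β*) with m(h) = 1 satisfies h(x) ≥ b for all x ∈ (0,1]. -/
open MeasureTheory Filter Set ProbabilityTheory
open scoped Classical

noncomputable section

/-- The Pomeau–Manneville map `T_α` (extended to `ℝ`; only its values on `[0,1]` matter). -/
def PM (a : ℝ) : ℝ → ℝ := fun x =>
  if x < 1/2 then x * (1 + 2 ^ a * x ^ a) else 2 * x - 1

/-- Time-dependent composition: `pmComp a n = T_{a (n-1)} ∘ ⋯ ∘ T_{a 0}`, `pmComp a 0 = id`. -/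
def pmComp (a : ℕ → ℝ) : ℕ → ℝ → ℝ
  | 0 => id
  | n+1 => PM (a n) ∘ pmComp a n

/-- The cone `C*(β)` of densities. -/
def memCone (β : ℝ) (h : ℝ → ℝ) : Prop :=
  ContinuousOn h (Set.Ioc 0 1) ∧
  IntegrableOn h (Set.Ioc 0 1) ∧
  (∀ x ∈ Set.Ioc (0:ℝ) 1, 0 ≤ h x) ∧
  AntitoneOn h (Set.Ioc 0 1) ∧
  MonotoneOn (fun x => x ^ (β + 1) * h x) (Set.Ioc 0 1) ∧
  ∀ x ∈ Set.Ioc (0:ℝ) 1, h x ≤ 2 ^ β * (2 + β) * x ^ (-β) * ∫ y in Set.Ioc (0:ℝ) 1, h y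

end

/-- Every probability density in the cone `C*(β*)`, `β* ∈ (0,1/2)`, is bounded below by a
positive constant `b = b(β*)` depending only on `β*`. -/
theorem cone_density_lower_bound (βs : ℝ) (hβs : βs ∈ Set.Ioo (0:ℝ) (1/2)) :
    ∃ b > 0, ∀ h : ℝ → ℝ, memCone βs h → (∫ y in Set.Ioc (0:ℝ) 1, h y) = 1 →
      ∀ x ∈ Set.Ioc (0:ℝ) 1, b ≤ h x := by
  obtain ⟨hβ0, hβ1⟩ := hβs
  set K : ℝ := 2 ^ βs * (2 + βs) with hK
  have h2β : (1:ℝ) ≤ 2 ^ βs := Real.one_le_rpow one_le_two hβ0.le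
  have hKpos : 0 < K := by positivity
  have hK2 : 2 ≤ K := by nlinarith
  set c : ℝ := (1 - βs) / (2 * K) with hc
  have hcpos : 0 < c := by
    apply div_pos <;> linarith
  have hc1 : c < 1 := by
    rw [hc, div_lt_one (by linarith)]; linarith
  set ε : ℝ := c ^ ((1:ℝ)/(1 - βs)) with hε
  have hεpos : 0 < ε := Real.rpow_pos_of_pos hcpos _
  have hβne : (1:ℝ) - βs ≠ 0 := by linarith
  have hεlt1 : ε < 1 := Real.rpow_lt_one hcpos.le hc1 (by
    apply div_pos one_pos; linarith)
  have hεpow : ε ^ (1 - βs) = c := by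
    rw [hε, ← Real.rpow_mul hcpos.le, one_div_mul_cancel hβne, Real.rpow_one]
  refine ⟨ε ^ (βs + 1) / 2, by positivity, ?_⟩
  intro h hcone hint x hx
  obtain ⟨hcont, hintg, hnn, hanti, hmono, hbound⟩ := hcone
  have hεmem : ε ∈ Set.Ioc (0:ℝ) 1 := ⟨hεpos, hεlt1.le⟩
  -- integrability of Ky^{-β} on Ioc 0 ε
  have hintr : IntegrableOn (fun y : ℝ => K * y ^ (-βs)) (Set.Ioc 0 ε) := by
    have := (intervalIntegral.intervalIntegrable_rpow' (a := 0) (b := ε) (r := -βs)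
      (by linarith)).1
    exact this.const_mul K
  -- bound on integral over small piece
  have hsub : Set.Ioc (0:ℝ) ε ⊆ Set.Ioc (0:ℝ) 1 := Set.Ioc_subset_Ioc_right hεlt1.le
  have hI1 : ∫ y in Set.Ioc (0:ℝ) ε, h y ≤ ∫ y in Set.Ioc (0:ℝ) ε, K * y ^ (-βs) := by
    apply setIntegral_mono_on (hintg.mono_set hsub) hintr measurableSet_Ioc
    intro y hy
    have := hbound y (hsub hy)
    rw [hint, mul_one] at this
    exact this
  have hI2 : ∫ y in Set.Ioc (0:ℝ) ε, K * y ^ (-βs) = 1/2 := by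
    rw [integral_const_mul, ← intervalIntegral.integral_of_le hεpos.le,
      integral_rpow (Or.inl (by linarith))]
    have h0 : (0:ℝ) ^ (-βs + 1) = 0 := Real.zero_rpow (by linarith)
    rw [h0]
    have he : -βs + 1 = 1 - βs := by ring
    rw [he, hεpow]
    have hKne : K ≠ 0 := ne_of_gt hKpos
    have hcd : c / (1 - βs) = 1 / (2 * K) := by
      rw [hc]; field_simp
    rw [sub_zero, hcd]
    field_simp
  -- split the integral
  have hsplit : (∫ y in Set.Ioc (0:ℝ) ε, h y) + ∫ y in Set.Ioc ε 1, h y = 1 := by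
    rw [← setIntegral_union (Set.Ioc_disjoint_Ioc_of_le le_rfl) measurableSet_Ioc
      (hintg.mono_set hsub) (hintg.mono_set (Set.Ioc_subset_Ioc_left hεpos.le)),
      Set.Ioc_union_Ioc_eq_Ioc hεpos.le hεlt1.le, hint]
  have hI3 : (1:ℝ)/2 ≤ ∫ y in Set.Ioc ε 1, h y := by linarith
  -- integral over big piece ≤ h ε
  have hnnε : 0 ≤ h ε := hnn ε hεmem
  have hI4 : ∫ y in Set.Ioc ε 1, h y ≤ h ε := by
    calc ∫ y in Set.Ioc ε 1, h y ≤ ∫ _y in Set.Ioc ε 1, h ε := by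
          apply setIntegral_mono_on (hintg.mono_set (Set.Ioc_subset_Ioc_left hεpos.le))
            (integrableOn_const measure_Ioc_lt_top.ne) measurableSet_Ioc
          intro y hy
          exact hanti hεmem ⟨lt_trans hεpos hy.1, hy.2⟩ hy.1.le
      _ = (1 - ε) * h ε := by
          rw [setIntegral_const, Real.volume_real_Ioc_of_le (by linarith),
            smul_eq_mul]
      _ ≤ h ε := by nlinarith
  have hhε : (1:ℝ)/2 ≤ h ε := le_trans hI3 hI4
  -- conclude
  rcases le_or_gt x ε with hxε | hεx
  · have : h ε ≤ h x := hanti hx hεmem hxε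
    have hεp1 : ε ^ (βs + 1) ≤ 1 :=
      Real.rpow_le_one hεpos.le hεlt1.le (by linarith)
    nlinarith
  · have hm := hmono hεmem hx hεx.le
    simp only at hm
    have hx1 : x ^ (βs + 1) ≤ 1 := Real.rpow_le_one hx.1.le hx.2 (by linarith)
    have hnnx : 0 ≤ h x := hnn x hx
    have hεp : 0 < ε ^ (βs + 1) := Real.rpow_pos_of_pos hεpos _
    nlinarith
end
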